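/- Let X and Y be continua, where Y is nondegenerate, locally connected and not an arc, and let f : X → Y be a surjective continuous map that is monotone and open. Then the diagonal Δ_X is a nonblock subcontinuum of X². -/

import Mathlib

open Set Metric

/-- A subcontinuum of a space `Z`: a nonempty compact connected subset. -/
def IsSubcontinuum {Z : Type*} [TopologicalSpace Z] (S : Set Z) : Prop :=
  IsCompact S ∧ IsConnected S

/-- `A` is a nonblock subcontinuum: a subcontinuum with empty interior such that there
is an increasing sequence of subcontinua contained in `Aᶜ` whose union is dense
in `Aᶜ`. -/
def IsNonblockSubcontinuum {Z : Type*} [TopologicalSpace Z] (A : Set Z) : Prop :=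
  IsSubcontinuum A ∧ interior A = ∅ ∧
    ∃ L : ℕ → Set Z, (∀ n, IsSubcontinuum (L n)) ∧ (∀ n, L n ⊆ Aᶜ) ∧
      (∀ n, L n ⊆ L (n + 1)) ∧ Aᶜ ⊆ closure (⋃ n, L n)


theorem prod_locallyConnected {α β : Type*} [TopologicalSpace α] [TopologicalSpace β]
    [LocallyConnectedSpace α] [LocallyConnectedSpace β] : LocallyConnectedSpace (α × β) := by
  rw [locallyConnectedSpace_iff_connected_subsets]
  rintro ⟨x, y⟩ U hU
  rw [mem_nhds_prod_iff] at hU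
  obtain ⟨s, hs, t, ht, hst⟩ := hU
  obtain ⟨Vs, hVs, hVsc, hVss⟩ := (locallyConnectedSpace_iff_connected_subsets.mp ‹_›) x s hs
  obtain ⟨Vt, hVt, hVtc, hVts⟩ := (locallyConnectedSpace_iff_connected_subsets.mp ‹_›) y t ht
  exact ⟨Vs ×ˢ Vt, prod_mem_nhds hVs hVt, hVsc.prod hVtc,
    (prod_mono hVss hVts).trans hst⟩

/-- In a locally compact, locally connected T2 space, two points of an open preconnected set
lie in a common continuum inside the set. -/
theorem join_in_open_connected {Z : Type*} [TopologicalSpace Z] [T2Space Z]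
    [LocallyCompactSpace Z] [LocallyConnectedSpace Z]
    {U : Set Z} (hU : IsOpen U) (hconn : IsPreconnected U) {p x : Z}
    (hp : p ∈ U) (hx : x ∈ U) :
    ∃ K, K ⊆ U ∧ IsCompact K ∧ IsConnected K ∧ p ∈ K ∧ x ∈ K := by
  classical
  set A : Set Z := {z | z ∈ U ∧ ∃ K, K ⊆ U ∧ IsCompact K ∧ IsConnected K ∧ p ∈ K ∧ z ∈ K} with hA
  -- local continuum neighborhoods
  have key : ∀ z ∈ U, ∃ V : Set Z, IsOpen V ∧ z ∈ V ∧ IsCompact (closure V) ∧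
      IsConnected (closure V) ∧ closure V ⊆ U := by
    intro z hz
    obtain ⟨K, hKc, hzK, hKU⟩ := exists_compact_subset hU hz
    set V := connectedComponentIn (interior K) z with hV
    have hVo : IsOpen V := isOpen_interior.connectedComponentIn
    have hzV : z ∈ V := mem_connectedComponentIn hzK
    have hVK : V ⊆ K := (connectedComponentIn_subset _ _).trans interior_subset
    have hclK : closure V ⊆ K := (hKc.isClosed.closure_subset_iff).mpr hVK
    refine ⟨V, hVo, hzV, hKc.of_isClosed_subset isClosed_closure hclK, ?_, hclK.trans hKU⟩
    exact (isConnected_connectedComponentIn_iff.mpr hzK).closure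
  have hAopen : IsOpen A := by
    rw [isOpen_iff_mem_nhds]
    rintro z ⟨hzU, K, hKU, hKc, hKconn, hpK, hzK⟩
    obtain ⟨V, hVo, hzV, hcVc, hcVconn, hcVU⟩ := key z hzU
    filter_upwards [hVo.mem_nhds hzV] with w hw
    refine ⟨hcVU (subset_closure hw), K ∪ closure V, union_subset hKU hcVU, hKc.union hcVc,
      hKconn.union ⟨z, hzK, subset_closure hzV⟩ hcVconn, Or.inl hpK, Or.inr (subset_closure hw)⟩
  have hCopen : IsOpen {z | z ∈ U ∧ z ∉ A} := by
    rw [isOpen_iff_mem_nhds]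
    rintro z ⟨hzU, hzA⟩
    obtain ⟨V, hVo, hzV, hcVc, hcVconn, hcVU⟩ := key z hzU
    filter_upwards [hVo.mem_nhds hzV] with w hw
    refine ⟨hcVU (subset_closure hw), fun hwA => hzA ?_⟩
    obtain ⟨hwU, K, hKU, hKc, hKconn, hpK, hwK⟩ := hwA
    exact ⟨hzU, K ∪ closure V, union_subset hKU hcVU, hKc.union hcVc,
      hKconn.union ⟨w, hwK, subset_closure hw⟩ hcVconn, Or.inl hpK, Or.inr (subset_closure hzV)⟩
  -- U preconnected, covered by A and its relative complement
  by_contra hcon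
  have hxC : x ∈ {z | z ∈ U ∧ z ∉ A} := ⟨hx, fun hxA => hcon hxA.2⟩
  have hpA : p ∈ A := ⟨hp, {p}, singleton_subset_iff.mpr hp, isCompact_singleton,
    isConnected_singleton, rfl, rfl⟩
  obtain ⟨w, hw⟩ := hconn A {z | z ∈ U ∧ z ∉ A} hAopen hCopen
    (fun z hz => by by_cases h : z ∈ A; exacts [Or.inl h, Or.inr ⟨hz, h⟩])
    ⟨p, hp, hpA⟩ ⟨x, hx, hxC⟩
  exact hw.2.2.2 hw.2.1

/-- Boundary of a connected component of an open set `F` lies in the frontier of `F`;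
we only need: points of `closure V \ V` are outside `F`. -/
theorem closure_connectedComponentIn_subset {Z : Type*} [TopologicalSpace Z]
    [LocallyConnectedSpace Z] {F : Set Z} (hF : IsOpen F) (x : Z) :
    closure (connectedComponentIn F x) ⊆ connectedComponentIn F x ∪ Fᶜ := by
  intro s hs
  by_cases hsF : s ∈ F
  · left
    have h1 : IsOpen (connectedComponentIn F s) := hF.connectedComponentIn
    have h2 : (connectedComponentIn F s ∩ connectedComponentIn F x).Nonempty := by
      have := mem_closure_iff.mp hs _ h1 (mem_connectedComponentIn hsF)
      exact this.imp fun z hz => ⟨hz.1, hz.2⟩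
    obtain ⟨z, hz1, hz2⟩ := h2
    rw [connectedComponentIn_eq hz2, ← connectedComponentIn_eq hz1]
    exact mem_connectedComponentIn hsF
  · exact Or.inr hsF

/-- Clopen trick: for pairwise distinct `p q r` in a connected, locally connected T1 space,
it is impossible that the component of `p` in `{q}ᶜ` misses `r` and the component of `p`
in `{r}ᶜ` misses `q`. -/
theorem comp_mem_or {Z : Type*} [TopologicalSpace Z] [ConnectedSpace Z]
    [LocallyConnectedSpace Z] [T1Space Z] {p q r : Z}
    (hpq : p ≠ q) (hpr : p ≠ r) (hqr : q ≠ r) :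
    q ∈ connectedComponentIn {r}ᶜ p ∨ r ∈ connectedComponentIn {q}ᶜ p := by
  by_contra hcon
  push_neg at hcon
  obtain ⟨hq, hr⟩ := hcon
  set V := connectedComponentIn {r}ᶜ p with hV
  set W := connectedComponentIn {q}ᶜ p with hW
  have hpV : p ∈ V := mem_connectedComponentIn (by simpa using hpr)
  have hpW : p ∈ W := mem_connectedComponentIn (by simpa using hpq)
  have hVW : V = W := by
    apply subset_antisymm
    · exact (isPreconnected_connectedComponentIn).subset_connectedComponentIn hpV
        (by intro z hz; simp only [mem_compl_iff, mem_singleton_iff]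
            rintro rfl; exact hq hz)
    · exact (isPreconnected_connectedComponentIn).subset_connectedComponentIn hpW
        (by intro z hz; simp only [mem_compl_iff, mem_singleton_iff]
            rintro rfl; exact hr hz)
  have hVopen : IsOpen V := (isOpen_compl_singleton).connectedComponentIn
  have hVclosed : IsClosed V := by
    rw [← closure_subset_iff_isClosed]
    intro s hs
    rcases closure_connectedComponentIn_subset isOpen_compl_singleton p hs with h | h
    · exact h
    · -- s = r; but also s ∈ W ∪ {q} via the W version
      exfalso
      simp only [compl_compl, mem_singleton_iff] at h
      subst h
      rw [hVW] at hs
      rcases closure_connectedComponentIn_subset isOpen_compl_singleton p hs with h' | h'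
      · exact hr h'
      · simp only [compl_compl, mem_singleton_iff] at h'
        exact hqr h'.symm
  have : V = univ := (isClopen_iff.mp ⟨hVclosed, hVopen⟩).resolve_left
    (Nonempty.ne_empty ⟨p, hpV⟩)
  apply hq
  rw [this]
  trivial

/-- If a connected space is the union of two closed sets meeting only in `{a}`,
then each of them is preconnected. -/
theorem preconn_of_closed_union_singleton {Y : Type*} [TopologicalSpace Y] [ConnectedSpace Y]
    {S T : Set Y} {a : Y} (hS : IsClosed S) (hT : IsClosed T) (hU : S ∪ T = univ)
    (hI : S ∩ T ⊆ {a}) (haS : a ∈ S) (haT : a ∈ T) : IsPreconnected S := by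
  rintro u v hu hv hSuv ⟨y, hyS, hyu⟩ ⟨z, hzS, hzv⟩
  by_contra hcon
  rw [not_nonempty_iff_eq_empty] at hcon
  -- a is in u or v; wlog- style case split
  have key : ∀ u' v' : Set Y, IsOpen u' → IsOpen v' → S ⊆ u' ∪ v' → S ∩ (u' ∩ v') = ∅ →
      a ∈ u' → ∀ w ∈ S, w ∈ v' → False := by
    intro u' v' hu' hv' hSuv' hdisj hau' w hwS hwv'
    set Q := S ∩ v' with hQ
    have hQclosed : IsClosed Q := by
      have : Q = S \ u' := by
        apply subset_antisymm
        · rintro q ⟨hqS, hqv⟩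
          exact ⟨hqS, fun hqu => (eq_empty_iff_forall_notMem.mp hdisj q) ⟨hqS, hqu, hqv⟩⟩
        · rintro q ⟨hqS, hqu⟩
          exact ⟨hqS, (hSuv' hqS).resolve_left hqu⟩
      rw [this]
      exact hS.sdiff hu'
    have hQopen : IsOpen Q := by
      have : Qᶜ = (S \ v') ∪ T := by
        apply subset_antisymm
        · intro q hq
          rcases (eq_univ_iff_forall.mp hU q) with hqS | hqT
          · exact Or.inl ⟨hqS, fun hqv => hq ⟨hqS, hqv⟩⟩
          · exact Or.inr hqT
        · rintro q (⟨hqS, hqv⟩ | hqT)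
          · exact fun hq => hqv hq.2
          · rintro ⟨hqS, hqv⟩
            have hqa : q = a := hI ⟨hqS, hqT⟩
            exact (eq_empty_iff_forall_notMem.mp hdisj q)
              ⟨hqS, by rw [hqa]; exact hau', hqv⟩
      have : IsClosed Qᶜ := by
        rw [this]; exact (hS.sdiff hv').union hT
      simpa using this.isOpen_compl
    have hQne : Q.Nonempty := ⟨w, hwS, hwv'⟩
    have hQuniv : Q = univ := (isClopen_iff.mp ⟨hQclosed, hQopen⟩).resolve_left hQne.ne_empty
    have haQ : a ∈ Q := hQuniv ▸ mem_univ a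
    exact (eq_empty_iff_forall_notMem.mp hdisj a) ⟨haS, hau', haQ.2⟩
  rcases hSuv haS with hau | hav
  · exact key u v hu hv hSuv hcon hau z hzS hzv
  · exact key v u hv hu (fun s hs => (hSuv hs).symm)
      (by rw [← hcon]; ext q; exact ⟨fun ⟨h1, h2, h3⟩ => ⟨h1, h3, h2⟩, fun ⟨h1, h2, h3⟩ => ⟨h1, h3, h2⟩⟩)
      hav y hyS hyu

/-- Local continuum neighborhoods in a locally compact, locally connected T2 space. -/
theorem local_continuum_nbhd {Z : Type*} [TopologicalSpace Z] [T2Space Z]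
    [LocallyCompactSpace Z] [LocallyConnectedSpace Z] {U : Set Z} (hU : IsOpen U)
    {z : Z} (hz : z ∈ U) :
    ∃ V : Set Z, IsOpen V ∧ z ∈ V ∧ IsCompact (closure V) ∧
      IsConnected (closure V) ∧ closure V ⊆ U := by
  obtain ⟨K, hKc, hzK, hKU⟩ := exists_compact_subset hU hz
  set V := connectedComponentIn (interior K) z with hV
  have hVo : IsOpen V := isOpen_interior.connectedComponentIn
  have hzV : z ∈ V := mem_connectedComponentIn hzK
  have hVK : V ⊆ K := (connectedComponentIn_subset _ _).trans interior_subset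
  have hclK : closure V ⊆ K := (hKc.isClosed.closure_subset_iff).mpr hVK
  exact ⟨V, hVo, hzV, hKc.of_isClosed_subset isClosed_closure hclK,
    (isConnected_connectedComponentIn_iff.mpr hzK).closure, hclK.trans hKU⟩

theorem swallow_compact {Z : Type*} [TopologicalSpace Z] [T2Space Z]
    [LocallyCompactSpace Z] [LocallyConnectedSpace Z] {U : Set Z} (hU : IsOpen U)
    (hconn : IsPreconnected U) {p : Z} (hp : p ∈ U) {K : Set Z} (hK : IsCompact K)
    (hKU : K ⊆ U) :
    ∃ L, IsCompact L ∧ IsConnected L ∧ L ⊆ U ∧ p ∈ L ∧ K ⊆ L := by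
  classical
  have step : ∀ x : Z, ∃ V W J : Set Z, IsOpen V ∧ (x ∉ U → V = ∅) ∧
      (x ∈ U → x ∈ V ∧ W = closure V ∧ IsCompact W ∧ IsConnected W ∧ W ⊆ U ∧
        J ⊆ U ∧ IsCompact J ∧ IsConnected J ∧ p ∈ J ∧ x ∈ J) := by
    intro x
    by_cases hx : x ∈ U
    · obtain ⟨V, hVo, hxV, h1, h2, h3⟩ := local_continuum_nbhd hU hx
      obtain ⟨J, hJ1, hJ2, hJ3, hJ4, hJ5⟩ := join_in_open_connected hU hconn hp hx
      exact ⟨V, closure V, J, hVo, fun h => absurd hx h,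
        fun _ => ⟨hxV, rfl, h1, h2, h3, hJ1, hJ2, hJ3, hJ4, hJ5⟩⟩
    · exact ⟨∅, ∅, ∅, isOpen_empty, fun _ => rfl, fun h => absurd h hx⟩
  choose V W J hVopen hVemp hprop using step
  have hcov : K ⊆ ⋃ x : Z, V x := fun k hk => mem_iUnion.mpr ⟨k, (hprop k (hKU hk)).1⟩
  obtain ⟨t, htcov⟩ := hK.elim_finite_subcover V hVopen hcov
  set D : Z → Set Z := fun x => if h : x ∈ U then W x ∪ J x else {p} with hD
  have hDp : ∀ x, p ∈ D x := by
    intro x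
    by_cases h : x ∈ U
    · simp only [hD, dif_pos h]; exact Or.inr (hprop x h).2.2.2.2.2.2.2.2.1
    · simp only [hD, dif_neg h]; exact rfl
  have hDconn : ∀ x, IsPreconnected (D x) := by
    intro x
    by_cases h : x ∈ U
    · obtain ⟨hxV, hWcl, hWc, hWconn, hWU, hJU, hJc, hJconn, hpJ, hxJ⟩ := hprop x h
      simp only [hD, dif_pos h]
      exact hWconn.isPreconnected.union x (hWcl ▸ subset_closure hxV) hxJ hJconn.isPreconnected
    · simp only [hD, dif_neg h]; exact isPreconnected_singleton
  have hDcomp : ∀ x, IsCompact (D x) := by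
    intro x
    by_cases h : x ∈ U
    · obtain ⟨hxV, hWcl, hWc, hWconn, hWU, hJU, hJc, hJconn, hpJ, hxJ⟩ := hprop x h
      simp only [hD, dif_pos h]; exact hWc.union hJc
    · simp only [hD, dif_neg h]; exact isCompact_singleton
  have hDU : ∀ x, D x ⊆ U := by
    intro x
    by_cases h : x ∈ U
    · obtain ⟨hxV, hWcl, hWc, hWconn, hWU, hJU, hJc, hJconn, hpJ, hxJ⟩ := hprop x h
      simp only [hD, dif_pos h]; exact union_subset hWU hJU
    · simp only [hD, dif_neg h]; exact singleton_subset_iff.mpr hp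
  refine ⟨{p} ∪ ⋃ x ∈ t, D x, ?_, ?_, ?_, Or.inl rfl, ?_⟩
  · exact isCompact_singleton.union (t.isCompact_biUnion fun x _ => hDcomp x)
  · constructor
    · exact ⟨p, Or.inl rfl⟩
    · have : ({p} ∪ ⋃ x ∈ t, D x) = ⋃₀ (insert {p} ((fun x => D x) '' t)) := by
        simp [sUnion_insert, sUnion_image]
      rw [this]
      apply isPreconnected_sUnion p
      · rintro s (rfl | ⟨x, hx, rfl⟩)
        · exact rfl
        · exact hDp x
      · rintro s (rfl | ⟨x, hx, rfl⟩)
        · exact isPreconnected_singleton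
        · exact hDconn x
  · refine union_subset (singleton_subset_iff.mpr hp) (iUnion₂_subset fun x _ => hDU x)
  · intro k hk
    obtain ⟨x, hxt, hkV⟩ := mem_iUnion₂.mp (htcov hk)
    have hxU : x ∈ U := by
      by_contra h
      rw [hVemp x h] at hkV
      exact hkV
    refine Or.inr (mem_biUnion hxt ?_)
    obtain ⟨hxV, hWcl, _⟩ := hprop x hxU
    simp only [hD, dif_pos hxU]
    exact Or.inl (hWcl ▸ subset_closure hkV)
theorem exhaustion_open_connected {Z : Type*} [MetricSpace Z] [CompactSpace Z]
    [LocallyConnectedSpace Z] {U : Set Z} (hU : IsOpen U) (hconn : IsPreconnected U)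
    (hne : U.Nonempty) :
    ∃ L : ℕ → Set Z, (∀ n, IsCompact (L n)) ∧ (∀ n, IsConnected (L n)) ∧
      (∀ n, L n ⊆ U) ∧ (∀ n, L n ⊆ L (n + 1)) ∧ U ⊆ ⋃ n, L n := by
  classical
  obtain ⟨p, hp⟩ := hne
  by_cases hcompl : Uᶜ = ∅
  · have hUuniv : U = univ := by simpa [compl_empty_iff] using hcompl
    refine ⟨fun _ => univ, fun _ => isCompact_univ, fun _ => ?_, fun _ => hUuniv ▸ le_rfl,
      fun _ => subset_rfl, hUuniv ▸ subset_iUnion (fun _ : ℕ => (univ : Set Z)) 0⟩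
    exact ⟨⟨p, trivial⟩, hUuniv ▸ hconn⟩
  · have hcne : Uᶜ.Nonempty := nonempty_iff_ne_empty.mpr hcompl
    set Kn : ℕ → Set Z := fun n => {x | (n + 1 : ℝ)⁻¹ ≤ Metric.infDist x Uᶜ} with hKn
    have hKclosed : ∀ n, IsClosed (Kn n) :=
      fun n => isClosed_le continuous_const (Metric.continuous_infDist_pt _)
    have hKcomp : ∀ n, IsCompact (Kn n) := fun n => (hKclosed n).isCompact
    have hKU : ∀ n, Kn n ⊆ U := by
      intro n x hx
      by_contra hxU
      have h0 : Metric.infDist x Uᶜ = 0 := Metric.infDist_zero_of_mem hxU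
      simp only [hKn, mem_setOf_eq] at hx
      have hpos : (0:ℝ) < (n + 1 : ℝ)⁻¹ := by positivity
      rw [h0] at hx
      linarith
    have hKcov : U ⊆ ⋃ n, Kn n := by
      intro x hx
      have hpos : 0 < Metric.infDist x Uᶜ :=
        (hU.isClosed_compl.notMem_iff_infDist_pos hcne).mp (by simpa using hx)
      obtain ⟨n, hn⟩ := exists_nat_gt (Metric.infDist x Uᶜ)⁻¹
      refine mem_iUnion.mpr ⟨n, ?_⟩
      show (n + 1 : ℝ)⁻¹ ≤ Metric.infDist x Uᶜ
      rw [inv_le_comm₀ (by positivity) hpos]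
      exact le_of_lt (lt_of_lt_of_le hn (by linarith))
    -- swallow each Kn
    have hsw : ∀ n, ∃ L, IsCompact L ∧ IsConnected L ∧ L ⊆ U ∧ p ∈ L ∧ Kn n ⊆ L :=
      fun n => swallow_compact hU hconn hp (hKcomp n) (hKU n)
    choose M hMc hMconn hMU hpM hKM using hsw
    set L : ℕ → Set Z := fun n => ⋃ m ∈ Finset.range (n+1), M m with hL
    have hpL : ∀ n, p ∈ L n := fun n => mem_biUnion (Finset.self_mem_range_succ n) (hpM n)
    refine ⟨L, fun n => (Finset.range (n+1)).isCompact_biUnion fun m _ => hMc m,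
      fun n => ⟨⟨p, hpL n⟩, ?_⟩, fun n => iUnion₂_subset fun m _ => hMU m, fun n => ?_, ?_⟩
    · have : L n = ⋃₀ ((fun m => M m) '' (Finset.range (n+1) : Set ℕ)) := by
        simp [hL, sUnion_image]
      rw [this]
      apply isPreconnected_sUnion p
      · rintro s ⟨m, hm, rfl⟩; exact hpM m
      · rintro s ⟨m, hm, rfl⟩; exact (hMconn m).isPreconnected
    · apply iUnion₂_subset fun m hm => ?_
      exact subset_biUnion_of_mem (Finset.mem_range.mpr (lt_trans (Finset.mem_range.mp hm) (by omega)))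
    · intro x hx
      obtain ⟨n, hn⟩ := mem_iUnion.mp (hKcov hx)
      exact mem_iUnion.mpr ⟨n, mem_biUnion (Finset.self_mem_range_succ n) (hKM n hn)⟩
/-- Preimage of a continuum under a continuous surjection with connected fibers,
from a compact space to a T2 space, is connected. -/
theorem preimage_connected_of_connected_fibers {W Z : Type*} [TopologicalSpace W]
    [TopologicalSpace Z] [CompactSpace W] [T2Space Z] {g : W → Z} (hg : Continuous g)
    (hsurj : Function.Surjective g) (hfib : ∀ z : Z, IsPreconnected (g ⁻¹' {z}))
    {T : Set Z} (hTc : IsCompact T) (hTconn : IsPreconnected T) (hTne : T.Nonempty) :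
    IsConnected (g ⁻¹' T) := by
  constructor
  · obtain ⟨z, hz⟩ := hTne
    obtain ⟨w, rfl⟩ := hsurj z
    exact ⟨w, hz⟩
  rintro u v hu hv hcov ⟨w₁, hw₁T, hw₁u⟩ ⟨w₂, hw₂T, hw₂v⟩
  by_contra hcon
  rw [not_nonempty_iff_eq_empty] at hcon
  have hfibsub : ∀ z ∈ T, g ⁻¹' {z} ⊆ u ∨ g ⁻¹' {z} ⊆ v := by
    intro z hz
    have hFsub : g ⁻¹' {z} ⊆ g ⁻¹' T := by
      intro w hw
      simp only [mem_preimage, mem_singleton_iff] at hw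
      simp [mem_preimage, hw, hz]
    have h1 : g ⁻¹' {z} ⊆ u ∪ v := fun w hw => hcov (hFsub hw)
    by_cases hcu : (g ⁻¹' {z} ∩ u).Nonempty
    · by_cases hcv : (g ⁻¹' {z} ∩ v).Nonempty
      · obtain ⟨w, hwF, hwuv⟩ := hfib z u v hu hv h1 hcu hcv
        exact ((eq_empty_iff_forall_notMem.mp hcon w) ⟨hFsub hwF, hwuv.1, hwuv.2⟩).elim
      · exact Or.inl (fun w hw => (h1 hw).resolve_right (fun h => hcv ⟨w, hw, h⟩))
    · exact Or.inr (fun w hw => (h1 hw).resolve_left (fun h => hcu ⟨w, hw, h⟩))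
  -- closed images
  set Cu : Set W := g ⁻¹' T \ u with hCu
  set Cv : Set W := g ⁻¹' T \ v with hCv
  have hTclosed : IsClosed T := hTc.isClosed
  have hCuc : IsCompact Cu := ((hTclosed.preimage hg).sdiff hu).isCompact
  have hCvc : IsCompact Cv := ((hTclosed.preimage hg).sdiff hv).isCompact
  have hO1 : IsOpen (g '' Cu)ᶜ := (hCuc.image hg).isClosed.isOpen_compl
  have hO2 : IsOpen (g '' Cv)ᶜ := (hCvc.image hg).isClosed.isOpen_compl
  have hTcover : T ⊆ (g '' Cu)ᶜ ∪ (g '' Cv)ᶜ := by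
    intro z hz
    rcases hfibsub z hz with h | h
    · left
      rintro ⟨w, hw, rfl⟩
      exact hw.2 (h (show g w ∈ ({g w} : Set Z) from rfl))
    · right
      rintro ⟨w, hw, rfl⟩
      exact hw.2 (h (show g w ∈ ({g w} : Set Z) from rfl))
  have hne1 : (T ∩ (g '' Cu)ᶜ).Nonempty := by
    refine ⟨g w₁, hw₁T, ?_⟩
    rintro ⟨w, hw, hgw⟩
    rcases hfibsub (g w₁) hw₁T with h | h
    · exact hw.2 (h (show g w ∈ ({g w₁} : Set Z) from hgw))
    · have : w₁ ∈ v := h (show g w₁ ∈ ({g w₁} : Set Z) from rfl)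
      exact (eq_empty_iff_forall_notMem.mp hcon w₁) ⟨hw₁T, hw₁u, this⟩
  have hne2 : (T ∩ (g '' Cv)ᶜ).Nonempty := by
    refine ⟨g w₂, hw₂T, ?_⟩
    rintro ⟨w, hw, hgw⟩
    rcases hfibsub (g w₂) hw₂T with h | h
    · have : w₂ ∈ u := h (show g w₂ ∈ ({g w₂} : Set Z) from rfl)
      exact (eq_empty_iff_forall_notMem.mp hcon w₂) ⟨hw₂T, this, hw₂v⟩
    · exact hw.2 (h (show g w ∈ ({g w₂} : Set Z) from hgw))
  obtain ⟨z, hzT, hz1, hz2⟩ := hTconn _ _ hO1 hO2 hTcover hne1 hne2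
  -- fiber of z avoids both complements of u and v inside preimage: contradiction
  obtain ⟨w, rfl⟩ := hsurj z
  have hwu : w ∉ Cu := fun h => hz1 ⟨w, h, rfl⟩
  have hwv : w ∉ Cv := fun h => hz2 ⟨w, h, rfl⟩
  have hwT : w ∈ g ⁻¹' T := hzT
  have : w ∈ u ∧ w ∈ v := ⟨by by_contra h; exact hwu ⟨hwT, h⟩, by by_contra h; exact hwv ⟨hwT, h⟩⟩
  exact (eq_empty_iff_forall_notMem.mp hcon w) ⟨hwT, this.1, this.2⟩
section Separation

variable {Y : Type*} [MetricSpace Y] [CompactSpace Y] [ConnectedSpace Y]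
  [LocallyConnectedSpace Y]

variable {A B : Set (Y × Y)}

/-- A preconnected subset of the off-diagonal meeting `A` is contained in `A`. -/
theorem conn_subset_A (hA : IsOpen A) (hB : IsOpen B)
    (hcov : ∀ p : Y × Y, p.1 ≠ p.2 → p ∈ A ∨ p ∈ B) (hdisj : A ∩ B = ∅)
    {C : Set (Y × Y)} (hC : IsPreconnected C) (hCoff : ∀ p ∈ C, Prod.fst p ≠ Prod.snd p)
    {q : Y × Y} (hq : q ∈ C) (hqA : q ∈ A) : C ⊆ A := by
  intro r hr
  by_contra hrA
  have hrB : r ∈ B := (hcov r (hCoff r hr)).resolve_left hrA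
  obtain ⟨s, hsC, hsA, hsB⟩ := hC A B hA hB
    (fun p hp => hcov p (hCoff p hp)) ⟨q, hq, hqA⟩ ⟨r, hr, hrB⟩
  exact (eq_empty_iff_forall_notMem.mp hdisj s) ⟨hsA, hsB⟩

theorem tool_i (hA : IsOpen A) (hB : IsOpen B)
    (hcov : ∀ p : Y × Y, p.1 ≠ p.2 → p ∈ A ∨ p ∈ B) (hdisj : A ∩ B = ∅)
    {a b : Y} (hab : (a, b) ∈ A) {C : Set Y} (hC : IsPreconnected C) (haC : a ∈ C)
    (hbC : b ∉ C) : ∀ x ∈ C, (x, b) ∈ A := by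
  intro x hx
  have himg : IsPreconnected ((fun c => (c, b)) '' C) :=
    hC.image _ (Continuous.continuousOn (by continuity))
  have hoff : ∀ p ∈ (fun c => (c, b)) '' C, Prod.fst p ≠ Prod.snd p := by
    rintro p ⟨c, hc, rfl⟩
    intro h
    simp only at h
    exact hbC (h ▸ hc)
  exact conn_subset_A hA hB hcov hdisj himg hoff ⟨a, haC, rfl⟩ hab ⟨x, hx, rfl⟩

theorem tool_ii (hA : IsOpen A) (hB : IsOpen B)
    (hcov : ∀ p : Y × Y, p.1 ≠ p.2 → p ∈ A ∨ p ∈ B) (hdisj : A ∩ B = ∅)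
    {a b : Y} (hab : (a, b) ∈ A) {D : Set Y} (hD : IsPreconnected D) (hbD : b ∈ D)
    (haD : a ∉ D) : ∀ z ∈ D, (a, z) ∈ A := by
  intro z hz
  have himg : IsPreconnected ((fun d => (a, d)) '' D) :=
    hD.image _ (Continuous.continuousOn (by continuity))
  have hoff : ∀ p ∈ (fun d => (a, d)) '' D, Prod.fst p ≠ Prod.snd p := by
    rintro p ⟨d, hd, rfl⟩
    intro h
    simp only at h
    exact haD (h.symm ▸ hd)
  exact conn_subset_A hA hB hcov hdisj himg hoff ⟨b, hbD, rfl⟩ hab ⟨z, hz, rfl⟩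

/-- A continuum joining two points of a connected component of a cosingleton set. -/
theorem join_compl_singleton {a b z : Y} (hb : b ≠ a)
    (h : z ∈ connectedComponentIn {a}ᶜ b) :
    ∃ C : Set Y, IsPreconnected C ∧ b ∈ C ∧ z ∈ C ∧ a ∉ C := by
  have hopen : IsOpen (connectedComponentIn {a}ᶜ b) :=
    isOpen_compl_singleton.connectedComponentIn
  have hbmem : b ∈ connectedComponentIn ({a}ᶜ : Set Y) b :=
    mem_connectedComponentIn (by simpa using hb)
  obtain ⟨C, hCsub, _, hCconn, hbC, hzC⟩ :=
    join_in_open_connected hopen isPreconnected_connectedComponentIn hbmem h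
  exact ⟨C, hCconn.isPreconnected, hbC, hzC, fun haC =>
    (connectedComponentIn_subset {a}ᶜ b (hCsub haC)) rfl⟩

end Separation
section Separation2

variable {Y : Type*} [MetricSpace Y] [CompactSpace Y] [ConnectedSpace Y]
  [LocallyConnectedSpace Y]

/-- The closure of the component of `z` in `{a}ᶜ` is a continuum containing `a` and `z`
and avoiding any point outside `comp ∪ {a}`. -/
theorem closure_comp_cosingleton {a z : Y} (hz : z ≠ a) :
    IsPreconnected (closure (connectedComponentIn {a}ᶜ z)) ∧
    z ∈ closure (connectedComponentIn {a}ᶜ z) ∧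
    a ∈ closure (connectedComponentIn {a}ᶜ z) ∧
    closure (connectedComponentIn {a}ᶜ z) ⊆ insert a (connectedComponentIn {a}ᶜ z) := by
  set V := connectedComponentIn ({a}ᶜ : Set Y) z with hV
  have hzV : z ∈ V := mem_connectedComponentIn (by simpa using hz)
  have hVopen : IsOpen V := isOpen_compl_singleton.connectedComponentIn
  have hsub : closure V ⊆ insert a V := by
    intro s hs
    rcases closure_connectedComponentIn_subset isOpen_compl_singleton z hs with h | h
    · exact Or.inr h
    · simp only [compl_compl, mem_singleton_iff] at h
      exact Or.inl h
  refine ⟨isPreconnected_connectedComponentIn.closure, subset_closure hzV, ?_, hsub⟩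
  by_contra ha
  have hVclosed : IsClosed V := by
    rw [← closure_subset_iff_isClosed]
    intro s hs
    rcases hsub hs with h | h
    · exact absurd (h ▸ hs) ha
    · exact h
  have huniv : V = univ := (isClopen_iff.mp ⟨hVclosed, hVopen⟩).resolve_left
    (Nonempty.ne_empty ⟨z, hzV⟩)
  have haV : a ∈ V := by rw [huniv]; trivial
  exact (connectedComponentIn_subset ({a}ᶜ : Set Y) z haV) rfl

variable {A B : Set (Y × Y)}

theorem step1 (hA : IsOpen A) (hB : IsOpen B)
    (hcov : ∀ p : Y × Y, p.1 ≠ p.2 → p ∈ A ∨ p ∈ B) (hdisj : A ∩ B = ∅)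
    (hAd : ∀ p ∈ A, Prod.fst p ≠ Prod.snd p)
    {a b : Y} (hab : (a, b) ∈ A) (hba : (b, a) ∈ A) :
    ∀ z, z ≠ a → (a, z) ∈ A := by
  intro z hza
  have hne : a ≠ b := hAd _ hab
  by_cases hzb : z = b
  · exact hzb ▸ hab
  -- main case:
  by_cases hc1 : z ∈ connectedComponentIn {a}ᶜ b
  · obtain ⟨D, hDconn, hbD, hzD, haD⟩ := join_compl_singleton (Ne.symm hne) hc1
    exact tool_ii hA hB hcov hdisj hab hDconn hbD haD z hzD
  · -- z is in another component of {a}ᶜ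
    obtain ⟨hCconn, hzC, haC, hCsub⟩ := closure_comp_cosingleton hza
    set C := closure (connectedComponentIn ({a}ᶜ : Set Y) z) with hC
    have hbC : b ∉ C := by
      intro hb
      rcases hCsub hb with h | h
      · exact hne h.symm
      · have hzz : z ∈ connectedComponentIn ({a}ᶜ : Set Y) z :=
          mem_connectedComponentIn (by simpa using hza)
        rw [connectedComponentIn_eq h] at hzz
        exact hc1 hzz
    -- (z, b) ∈ A and (b, z) ∈ A
    have hzbA : (z, b) ∈ A := tool_i hA hB hcov hdisj hab hCconn haC hbC z hzC
    have hbzA : (b, z) ∈ A := tool_ii hA hB hcov hdisj hba hCconn haC hbC z hzC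
    -- now join a and b avoiding z
    have hcase : a ∈ connectedComponentIn {z}ᶜ b ∨ z ∈ connectedComponentIn {a}ᶜ b :=
      comp_mem_or (Ne.symm hne) (fun h => hzb (h.symm)) (fun h => hza h.symm)
    rcases hcase with h | h
    · obtain ⟨C', hC'conn, hbC', haC', hzC'⟩ := join_compl_singleton (by
        intro h'; exact hzb h'.symm) h
      exact tool_i hA hB hcov hdisj hbzA hC'conn hbC' hzC' a haC'
    · exact absurd h hc1

end Separation2
section Separation3

variable {Y : Type*} [MetricSpace Y] [CompactSpace Y] [ConnectedSpace Y]
  [LocallyConnectedSpace Y]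

variable {A B : Set (Y × Y)}

theorem offdiag_subset_of_sym_pair (hA : IsOpen A) (hB : IsOpen B)
    (hcov : ∀ p : Y × Y, p.1 ≠ p.2 → p ∈ A ∨ p ∈ B) (hdisj : A ∩ B = ∅)
    (hAd : ∀ p ∈ A, Prod.fst p ≠ Prod.snd p)
    {a b : Y} (hab : (a, b) ∈ A) (hba : (b, a) ∈ A) :
    ∀ x y : Y, x ≠ y → (x, y) ∈ A := by
  have h1 : ∀ z, z ≠ a → (a, z) ∈ A := step1 hA hB hcov hdisj hAd hab hba
  have hA' : IsOpen (Prod.swap ⁻¹' A : Set (Y × Y)) := hA.preimage continuous_swap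
  have hB' : IsOpen (Prod.swap ⁻¹' B : Set (Y × Y)) := hB.preimage continuous_swap
  have hcov' : ∀ p : Y × Y, p.1 ≠ p.2 → p ∈ Prod.swap ⁻¹' A ∨ p ∈ Prod.swap ⁻¹' B :=
    fun p hp => hcov p.swap (by simpa using hp.symm)
  have hdisj' : (Prod.swap ⁻¹' A) ∩ (Prod.swap ⁻¹' B) = ∅ := by
    ext p
    simp only [mem_inter_iff, mem_preimage, mem_empty_iff_false, iff_false, not_and]
    intro h1' h2'
    exact (eq_empty_iff_forall_notMem.mp hdisj p.swap) ⟨h1', h2'⟩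
  have hAd' : ∀ p ∈ (Prod.swap ⁻¹' A : Set (Y × Y)), Prod.fst p ≠ Prod.snd p :=
    fun p hp => (hAd p.swap hp).symm
  have h2 : ∀ z, z ≠ a → (z, a) ∈ A := by
    have := step1 hA' hB' hcov' hdisj' hAd' (a := a) (b := b)
      (by simpa using hba) (by simpa using hab)
    intro z hz
    simpa using this z hz
  intro x y hxy
  by_cases hxa : x = a
  · subst hxa; exact h1 y (Ne.symm hxy)
  by_cases hya : y = a
  · subst hya; exact h2 x hxa
  rcases comp_mem_or (p := a) (q := x) (r := y)
      (fun h => hxa h.symm) (fun h => hya h.symm) hxy with h | h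
  · obtain ⟨C, hCconn, haC, hxC, hyC⟩ := join_compl_singleton (fun h' => hya h'.symm) h
    exact tool_i hA hB hcov hdisj (h1 y hya) hCconn haC hyC x hxC
  · obtain ⟨D, hDconn, haD, hyD, hxD⟩ := join_compl_singleton (fun h' => hxa h'.symm) h
    exact tool_ii hA hB hcov hdisj (h2 x hxa) hDconn haD hxD y hyD

theorem sep_antisym (hA : IsOpen A) (hB : IsOpen B)
    (hcov : ∀ p : Y × Y, p.1 ≠ p.2 → p ∈ A ∨ p ∈ B) (hdisj : A ∩ B = ∅)
    (hAd : ∀ p ∈ A, Prod.fst p ≠ Prod.snd p)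
    (hBd : ∀ p ∈ B, Prod.fst p ≠ Prod.snd p) (hBne : B.Nonempty) :
    ∀ a b : Y, (a, b) ∈ A → (b, a) ∈ A → False := by
  intro a b hab hba
  obtain ⟨q, hq⟩ := hBne
  have : q ∈ A := offdiag_subset_of_sym_pair hA hB hcov hdisj hAd hab hba q.1 q.2 (hBd q hq)
  exact (eq_empty_iff_forall_notMem.mp hdisj q) ⟨by simpa using this, hq⟩

end Separation3
section Arc

variable {Y : Type*} [MetricSpace Y] [CompactSpace Y] [ConnectedSpace Y]
  [LocallyConnectedSpace Y]

variable {A B : Set (Y × Y)}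

theorem closed_union_diag (hB : IsOpen B)
    (hcov : ∀ p : Y × Y, p.1 ≠ p.2 → p ∈ A ∨ p ∈ B) (hdisj : A ∩ B = ∅)
    (hBd : ∀ p ∈ B, Prod.fst p ≠ Prod.snd p) :
    IsClosed (A ∪ {p : Y × Y | p.1 = p.2}) := by
  rw [← closure_subset_iff_isClosed]
  intro p hp
  by_cases hd : p.1 = p.2
  · exact Or.inr hd
  rcases hcov p hd with h | h
  · exact Or.inl h
  · exfalso
    rcases mem_closure_iff.mp hp B hB h with ⟨q, hqB, hq⟩
    rcases hq with hq | hq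
    · exact (eq_empty_iff_forall_notMem.mp hdisj q) ⟨hq, hqB⟩
    · exact hBd q hqB hq

/-- The "column" slice `insert a {z | (a,z) ∈ A}` is closed. -/
theorem slice_closed (hB : IsOpen B)
    (hcov : ∀ p : Y × Y, p.1 ≠ p.2 → p ∈ A ∨ p ∈ B) (hdisj : A ∩ B = ∅)
    (hBd : ∀ p ∈ B, Prod.fst p ≠ Prod.snd p) (a : Y) :
    IsClosed (insert a {z | (a, z) ∈ A}) := by
  have h1 : insert a {z | (a, z) ∈ A} =
      (fun z => ((a : Y), z)) ⁻¹' (A ∪ {p : Y × Y | p.1 = p.2}) := by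
    ext z
    simp only [mem_insert_iff, mem_preimage, mem_union, mem_setOf_eq]
    constructor
    · rintro (rfl | h)
      · exact Or.inr rfl
      · exact Or.inl h
    · rintro (h | h)
      · exact Or.inr h
      · exact Or.inl h.symm
  rw [h1]
  exact (closed_union_diag hB hcov hdisj hBd).preimage (by continuity)

/-- The "row" slice `insert b {x | (x,b) ∈ A}` is closed. -/
theorem slice_closed' (hB : IsOpen B)
    (hcov : ∀ p : Y × Y, p.1 ≠ p.2 → p ∈ A ∨ p ∈ B) (hdisj : A ∩ B = ∅)
    (hBd : ∀ p ∈ B, Prod.fst p ≠ Prod.snd p) (b : Y) :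
    IsClosed (insert b {x | (x, b) ∈ A}) := by
  have h1 : insert b {x | (x, b) ∈ A} =
      (fun x => (x, (b : Y))) ⁻¹' (A ∪ {p : Y × Y | p.1 = p.2}) := by
    ext x
    simp only [mem_insert_iff, mem_preimage, mem_union, mem_setOf_eq]
    constructor
    · rintro (rfl | h)
      · exact Or.inr rfl
      · exact Or.inl h
    · rintro (h | h)
      · exact Or.inr h
      · exact Or.inl h
  rw [h1]
  exact (closed_union_diag hB hcov hdisj hBd).preimage (by continuity)

/-- The column slice is preconnected. -/
theorem slice_preconn (hA : IsOpen A) (hB : IsOpen B)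
    (hcov : ∀ p : Y × Y, p.1 ≠ p.2 → p ∈ A ∨ p ∈ B) (hdisj : A ∩ B = ∅)
    (hAd : ∀ p ∈ A, Prod.fst p ≠ Prod.snd p)
    (hBd : ∀ p ∈ B, Prod.fst p ≠ Prod.snd p) (a : Y) :
    IsPreconnected (insert a {z | (a, z) ∈ A}) := by
  have hcov' : ∀ p : Y × Y, p.1 ≠ p.2 → p ∈ B ∨ p ∈ A := fun p hp => (hcov p hp).symm
  have hdisj' : B ∩ A = ∅ := by rw [inter_comm]; exact hdisj
  apply preconn_of_closed_union_singleton (slice_closed hB hcov hdisj hBd a)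
    (slice_closed (A := B) hA hcov' hdisj' hAd a)
  · ext z
    simp only [mem_union, mem_insert_iff, mem_setOf_eq, mem_univ, iff_true]
    by_cases hz : z = a
    · exact Or.inl (Or.inl hz)
    · rcases hcov (a, z) (fun h => hz h.symm) with h | h
      · exact Or.inl (Or.inr h)
      · exact Or.inr (Or.inr h)
  · rintro z ⟨(rfl | h1), (h2 | h2)⟩
    · rfl
    · rfl
    · exact h2
    · exact absurd (eq_empty_iff_forall_notMem.mp hdisj (a, z)) (fun h => h ⟨h1, h2⟩)
  · exact Or.inl rfl
  · exact Or.inl rfl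

theorem sep_trans (hA : IsOpen A) (hB : IsOpen B)
    (hcov : ∀ p : Y × Y, p.1 ≠ p.2 → p ∈ A ∨ p ∈ B) (hdisj : A ∩ B = ∅)
    (hAd : ∀ p ∈ A, Prod.fst p ≠ Prod.snd p)
    (hBd : ∀ p ∈ B, Prod.fst p ≠ Prod.snd p) (hBne : B.Nonempty)
    {x y z : Y} (hxy : (x, y) ∈ A) (hyz : (y, z) ∈ A) : (x, z) ∈ A := by
  have hanti := sep_antisym hA hB hcov hdisj hAd hBd hBne
  have hD := slice_preconn hA hB hcov hdisj hAd hBd y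
  have hxD : x ∉ insert y {w | (y, w) ∈ A} := by
    rintro (rfl | h)
    · exact hAd _ hxy rfl
    · exact hanti x y hxy h
  exact tool_ii hA hB hcov hdisj hxy hD (Or.inl rfl) hxD z (Or.inr hyz)

end Arc
section ArcMain

variable {Y : Type*} [MetricSpace Y] [CompactSpace Y] [ConnectedSpace Y]
  [LocallyConnectedSpace Y]

theorem arc_of_separation {A B : Set (Y × Y)}
    (hA : IsOpen A) (hB : IsOpen B)
    (hcov : ∀ p : Y × Y, p.1 ≠ p.2 → p ∈ A ∨ p ∈ B) (hdisj : A ∩ B = ∅)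
    (hAd : ∀ p ∈ A, Prod.fst p ≠ Prod.snd p)
    (hBd : ∀ p ∈ B, Prod.fst p ≠ Prod.snd p)
    (hAne : A.Nonempty) (hBne : B.Nonempty) :
    Nonempty (Y ≃ₜ (Set.Icc (0 : ℝ) 1)) := by
  classical
  have hanti := sep_antisym hA hB hcov hdisj hAd hBd hBne
  have htrans : ∀ {x y z : Y}, (x, y) ∈ A → (y, z) ∈ A → (x, z) ∈ A :=
    fun hxy hyz => sep_trans hA hB hcov hdisj hAd hBd hBne hxy hyz
  have htotal : ∀ x y : Y, x ≠ y → (x, y) ∈ A ∨ (y, x) ∈ A := by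
    intro x y hxy
    rcases hcov (x, y) hxy with h | h
    · exact Or.inl h
    · -- apply antisymmetry for B
      have hanti' := sep_antisym hB hA (fun p hp => (hcov p hp).symm)
        (by rw [inter_comm]; exact hdisj) hBd hAd hAne
      rcases hcov (y, x) (Ne.symm hxy) with h' | h'
      · exact Or.inr h'
      · exact absurd (hanti' x y h h') (fun f => f)
  -- the linear order
  letI : LT Y := ⟨fun x y => (x, y) ∈ A⟩
  letI : LE Y := ⟨fun x y => x = y ∨ (x, y) ∈ A⟩
  have hlt_def : ∀ x y : Y, x < y ↔ (x, y) ∈ A := fun _ _ => Iff.rfl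
  have hle_def : ∀ x y : Y, x ≤ y ↔ x = y ∨ (x, y) ∈ A := fun _ _ => Iff.rfl
  letI linY : LinearOrder Y :=
    { le_refl := fun a => Or.inl rfl
      le_trans := by
        rintro a b c (rfl | hab) h
        · exact h
        · rcases h with rfl | hbc
          · exact Or.inr hab
          · exact Or.inr (htrans hab hbc)
      le_antisymm := by
        rintro a b (rfl | hab) h
        · rfl
        · rcases h with rfl | hba
          · rfl
          · exact absurd (hanti a b hab hba) (fun f => f)
      le_total := by
        intro a b
        by_cases hab : a = b
        · exact Or.inl (Or.inl hab)
        · rcases htotal a b hab with h | h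
          · exact Or.inl (Or.inr h)
          · exact Or.inr (Or.inr h)
      lt_iff_le_not_ge := by
        intro a b
        constructor
        · intro h
          refine ⟨Or.inr h, ?_⟩
          rintro (rfl | hba)
          · exact hAd _ h rfl
          · exact hanti a b h hba
        · rintro ⟨(rfl | hab), hnot⟩
          · exact absurd (Or.inl rfl) hnot
          · exact hab
      toDecidableLE := Classical.decRel _ }
  -- basic topological facts about the order
  have hIioOpen : ∀ y : Y, IsOpen {x | x < y} := by
    intro y
    have : {x | x < y} = (fun x => (x, y)) ⁻¹' A := rfl
    rw [this]
    exact hA.preimage (by continuity)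
  have hIoiOpen : ∀ y : Y, IsOpen {x | y < x} := by
    intro y
    have : {x | y < x} = (fun x => (y, x)) ⁻¹' A := rfl
    rw [this]
    exact hA.preimage (by continuity)
  have hIicClosed : ∀ y : Y, IsClosed {x | x ≤ y} := by
    intro y
    have : {x | x ≤ y} = insert y {x | (x, y) ∈ A} := by
      ext x
      simp only [mem_setOf_eq, mem_insert_iff, hle_def]
    rw [this]
    exact slice_closed' hB hcov hdisj hBd y
  have hIciClosed : ∀ y : Y, IsClosed {x | y ≤ x} := by
    intro y
    have : {x | y ≤ x} = insert y {x | (y, x) ∈ A} := by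
      ext x
      simp only [mem_setOf_eq, mem_insert_iff, hle_def]
      constructor
      · rintro (h | h); exacts [Or.inl h.symm, Or.inr h]
      · rintro (h | h); exacts [Or.inl h.symm, Or.inr h]
    rw [this]
    exact slice_closed hB hcov hdisj hBd y
  -- existence of least upper bounds
  have hlub : ∀ S : Set Y, S.Nonempty → ∃ z, IsLUB S z := by
    intro S hSne
    set UB := upperBounds S with hUB
    have hUBclosed : IsClosed UB := by
      have : UB = ⋂ s ∈ S, {x | s ≤ x} := by
        ext x
        simp only [hUB, upperBounds, mem_setOf_eq, mem_iInter]
      rw [this]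
      exact isClosed_biInter (fun s _ => hIciClosed s)
    have hUBne : UB.Nonempty := by
      -- a maximum exists by compactness
      have hmax : (⋂ y : Y, {x | y ≤ x}).Nonempty := by
        apply IsCompact.nonempty_iInter_of_directed_nonempty_isCompact_isClosed
        · intro y y'
          rcases le_total y y' with h | h
          · exact ⟨y', fun x hx => le_trans h hx, fun x hx => hx⟩
          · exact ⟨y, fun x hx => hx, fun x hx => le_trans h hx⟩
        · exact fun y => ⟨y, le_refl y⟩
        · exact fun y => (hIciClosed y).isCompact
        · exact fun y => hIciClosed y
      obtain ⟨Mx, hMx⟩ := hmax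
      simp only [mem_iInter, mem_setOf_eq] at hMx
      exact ⟨Mx, fun s _ => hMx s⟩
    -- now pick the least element of UB
    have hleast : ∃ z ∈ UB, ∀ u ∈ UB, z ≤ u := by
      haveI hne : Nonempty UB := hUBne.to_subtype
      have h2 : (⋂ u : UB, ({x | x ≤ u.1} ∩ UB)).Nonempty := by
        apply IsCompact.nonempty_iInter_of_directed_nonempty_isCompact_isClosed
        · intro u v
          rcases le_total u.1 v.1 with h | h
          · exact ⟨u, fun x hx => hx, fun x hx => ⟨le_trans hx.1 h, hx.2⟩⟩
          · exact ⟨v, fun x hx => ⟨le_trans hx.1 h, hx.2⟩, fun x hx => hx⟩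
        · exact fun u => ⟨u.1, show u.1 ≤ u.1 from le_refl _, u.2⟩
        · exact fun u => ((hIicClosed u.1).inter hUBclosed).isCompact
        · exact fun u => (hIicClosed u.1).inter hUBclosed
      obtain ⟨z, hz⟩ := h2
      simp only [mem_iInter, mem_inter_iff, mem_setOf_eq] at hz
      obtain ⟨u0⟩ := hne
      exact ⟨z, (hz u0).2, fun u hu => (hz ⟨u, hu⟩).1⟩
    obtain ⟨z, hzUB, hzleast⟩ := hleast
    exact ⟨z, hzUB, fun u hu => hzleast u hu⟩
  -- minimum and maximum
  obtain ⟨mY, hmY⟩ : ∃ m : Y, ∀ y : Y, m ≤ y := by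
    have h := IsCompact.nonempty_iInter_of_directed_nonempty_isCompact_isClosed
      (fun y : Y => {x | x ≤ y}) ?_ (fun y => ⟨y, le_refl y⟩)
      (fun y => (hIicClosed y).isCompact) (fun y => hIicClosed y)
    · obtain ⟨m, hm⟩ := h
      simp only [mem_iInter, mem_setOf_eq] at hm
      exact ⟨m, hm⟩
    · intro y y'
      rcases le_total y y' with h | h
      · exact ⟨y, fun x hx => hx, fun x hx => le_trans hx h⟩
      · exact ⟨y', fun x hx => le_trans hx h, fun x hx => hx⟩
  obtain ⟨MY, hMY⟩ : ∃ M : Y, ∀ y : Y, y ≤ M := by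
    have h := IsCompact.nonempty_iInter_of_directed_nonempty_isCompact_isClosed
      (fun y : Y => {x | y ≤ x}) ?_ (fun y => ⟨y, le_refl y⟩)
      (fun y => (hIciClosed y).isCompact) (fun y => hIciClosed y)
    · obtain ⟨M, hM⟩ := h
      simp only [mem_iInter, mem_setOf_eq] at hM
      exact ⟨M, hM⟩
    · intro y y'
      rcases le_total y y' with h | h
      · exact ⟨y', fun x hx => le_trans h hx, fun x hx => hx⟩
      · exact ⟨y, fun x hx => hx, fun x hx => le_trans h hx⟩
  -- dense order
  have hdense : ∀ x y : Y, x < y → ∃ z, x < z ∧ z < y := by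
    intro x y hxy
    by_contra hcon
    push_neg at hcon
    have hcover : {z | z ≤ x} ∪ {z | y ≤ z} = univ := by
      ext z
      simp only [mem_union, mem_setOf_eq, mem_univ, iff_true]
      rcases le_total z x with h | h
      · exact Or.inl h
      · rcases lt_or_ge z y with h' | h'
        · left
          rcases lt_or_ge x z with h'' | h''
          · exact absurd (hcon z h'') (not_le_of_gt h')
          · exact h''
        · exact Or.inr h'
    have hdisj2 : {z | z ≤ x} ∩ {z | y ≤ z} = ∅ := by
      ext z
      simp only [mem_inter_iff, mem_setOf_eq, mem_empty_iff_false, iff_false, not_and]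
      intro h1 h2
      exact absurd (le_trans h2 h1) (not_le_of_gt hxy)
    have hclopen : IsClopen {z | z ≤ x} := by
      constructor
      · exact hIicClosed x
      · have : {z | z ≤ x} = ({z | y ≤ z})ᶜ := by
          ext z
          simp only [mem_setOf_eq, mem_compl_iff]
          constructor
          · intro h1 h2
            exact absurd (le_trans h2 h1) (not_le_of_gt hxy)
          · intro h1
            have := eq_univ_iff_forall.mp hcover z
            simpa [h1] using this
        rw [this]
        exact (hIciClosed y).isOpen_compl
    rcases isClopen_iff.mp hclopen with h | h
    · exact absurd (eq_empty_iff_forall_notMem.mp h x) (fun f => f (le_refl x))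
    · have : y ≤ x := by rw [eq_univ_iff_forall] at h; exact h y
      exact absurd this (not_le_of_gt hxy)
  -- m < M
  have hmM : mY < MY := by
    obtain ⟨⟨a, b⟩, hab⟩ := hAne
    have hne := hAd _ hab
    rcases lt_trichotomy mY MY with h | h | h
    · exact h
    · exfalso
      have h1 : a ≤ b := le_trans (le_trans (hMY a) (le_of_eq h.symm)) (hmY b)
      have h2 : b ≤ a := le_trans (le_trans (hMY b) (le_of_eq h.symm)) (hmY a)
      exact hne (le_antisymm h1 h2)
    · exact absurd (hmY MY) (not_le_of_gt h)
  -- countable dense subset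
  obtain ⟨Dc, hDcct, hDcdense⟩ := TopologicalSpace.exists_countable_dense Y
  have hIooOpen : ∀ x y : Y, IsOpen {z | x < z ∧ z < y} := by
    intro x y
    have : {z | x < z ∧ z < y} = {z | x < z} ∩ {z | z < y} := rfl
    rw [this]
    exact (hIoiOpen x).inter (hIioOpen y)
  have hIooNe : ∀ x y : Y, x < y → ∃ d ∈ Dc, x < d ∧ d < y := by
    intro x y h
    obtain ⟨z, hz1, hz2⟩ := hdense x y h
    obtain ⟨d, hd1, hd2⟩ := hDcdense.exists_mem_open (hIooOpen x y) ⟨z, hz1, hz2⟩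
    exact ⟨d, hd1, hd2.1, hd2.2⟩
  set E : Set Y := {d | d ∈ Dc ∧ mY < d ∧ d < MY} with hE
  haveI hEcount : Countable E := (hDcct.mono (fun d hd => hd.1)).to_subtype
  haveI : Nonempty E := by
    obtain ⟨d, h1, h2, h3⟩ := hIooNe mY MY hmM
    exact ⟨⟨d, h1, h2, h3⟩⟩
  haveI : DenselyOrdered E := by
    constructor
    rintro ⟨a, ha⟩ ⟨b, hb⟩ hab
    rw [Subtype.mk_lt_mk] at hab
    obtain ⟨d, h1, h2, h3⟩ := hIooNe a b hab
    exact ⟨⟨d, h1, lt_trans ha.2.1 h2, lt_trans h3 hb.2.2⟩,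
      Subtype.mk_lt_mk.mpr h2, Subtype.mk_lt_mk.mpr h3⟩
  haveI : NoMinOrder E := by
    constructor
    rintro ⟨a, ha⟩
    obtain ⟨d, h1, h2, h3⟩ := hIooNe mY a ha.2.1
    exact ⟨⟨d, h1, h2, lt_trans h3 ha.2.2⟩, Subtype.mk_lt_mk.mpr h3⟩
  haveI : NoMaxOrder E := by
    constructor
    rintro ⟨a, ha⟩
    obtain ⟨d, h1, h2, h3⟩ := hIooNe a MY ha.2.2
    exact ⟨⟨d, h1, lt_trans ha.2.1 h2, h3⟩, Subtype.mk_lt_mk.mpr h2⟩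
  -- the rational parameter space
  haveI : Nonempty (Set.Ioo (0:ℚ) 1) := ⟨⟨1/2, by norm_num⟩⟩
  haveI : NoMinOrder (Set.Ioo (0:ℚ) 1) := by
    constructor
    rintro ⟨a, ha⟩
    obtain ⟨q, h1, h2⟩ := exists_between ha.1
    exact ⟨⟨q, h1, lt_trans h2 ha.2⟩, Subtype.mk_lt_mk.mpr h2⟩
  haveI : NoMaxOrder (Set.Ioo (0:ℚ) 1) := by
    constructor
    rintro ⟨a, ha⟩
    obtain ⟨q, h1, h2⟩ := exists_between ha.2
    exact ⟨⟨q, lt_trans ha.1 h1, h2⟩, Subtype.mk_lt_mk.mpr h1⟩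
  obtain ⟨φ⟩ : Nonempty ((Set.Ioo (0:ℚ) 1) ≃o E) := Order.iso_of_countable_dense _ _
  -- the extension to [0,1]
  set Sset : Set.Icc (0:ℝ) 1 → Set Y := fun t =>
    insert mY ((fun q : Set.Ioo (0:ℚ) 1 => (φ q : Y)) ''
      {q : Set.Ioo (0:ℚ) 1 | ((q : ℚ) : ℝ) < t.1}) with hSset
  have hSne : ∀ t, (Sset t).Nonempty := fun t => ⟨mY, mem_insert _ _⟩
  choose FY hFY using fun t => hlub (Sset t) (hSne t)
  have hφmono : ∀ {q q' : Set.Ioo (0:ℚ) 1}, q < q' → (φ q : Y) < (φ q' : Y) := by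
    intro q q' h
    exact Subtype.coe_lt_coe.mpr (φ.lt_iff_lt.mpr h)
  have hFmono : StrictMono FY := by
    intro t t' htt'
    have htt : (t.1 : ℝ) < t'.1 := htt'
    obtain ⟨q1, hq1a, hq1b⟩ := exists_rat_btwn htt
    obtain ⟨q2, hq2a, hq2b⟩ := exists_rat_btwn hq1b
    have hq1pos : (0:ℚ) < q1 := by
      have : (0:ℝ) < (q1:ℝ) := lt_of_le_of_lt t.2.1 hq1a
      exact_mod_cast this
    have hq2lt1 : q2 < (1:ℚ) := by
      have : (q2:ℝ) < 1 := lt_of_lt_of_le hq2b t'.2.2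
      exact_mod_cast this
    have hq1q2 : q1 < q2 := by exact_mod_cast hq2a
    set Q1 : Set.Ioo (0:ℚ) 1 := ⟨q1, hq1pos, lt_trans hq1q2 hq2lt1⟩
    set Q2 : Set.Ioo (0:ℚ) 1 := ⟨q2, lt_trans hq1pos hq1q2, hq2lt1⟩
    have h1 : FY t ≤ (φ Q1 : Y) := by
      apply (hFY t).2
      rintro s (rfl | ⟨q, hq, rfl⟩)
      · exact hmY _
      · have hqQ1 : q < Q1 := by
          rw [← Subtype.coe_lt_coe]
          have : ((q:ℚ):ℝ) < (q1:ℝ) := lt_trans hq hq1a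
          exact_mod_cast this
        exact le_of_lt (hφmono hqQ1)
    have h2 : (φ Q2 : Y) ≤ FY t' := by
      apply (hFY t').1
      exact mem_insert_iff.mpr (Or.inr ⟨Q2, hq2b, rfl⟩)
    exact lt_of_le_of_lt h1 (lt_of_lt_of_le (hφmono (Subtype.mk_lt_mk.mpr hq1q2)) h2)
  have hFsurj : Function.Surjective FY := by
    intro y
    set T : Set ℝ := insert 0 ((fun q : Set.Ioo (0:ℚ) 1 => ((q : ℚ) : ℝ)) ''
      {q : Set.Ioo (0:ℚ) 1 | (φ q : Y) ≤ y}) with hT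
    have hTne : T.Nonempty := ⟨0, mem_insert _ _⟩
    have hTbdd : BddAbove T := by
      refine ⟨1, ?_⟩
      rintro r (rfl | ⟨q, hq, rfl⟩)
      · norm_num
      · show ((q : ℚ) : ℝ) ≤ 1
        exact_mod_cast le_of_lt q.2.2
    have hTsub : ∀ r ∈ T, (0:ℝ) ≤ r ∧ r ≤ 1 := by
      rintro r (rfl | ⟨q, hq, rfl⟩)
      · norm_num
      · constructor
        · show (0:ℝ) ≤ ((q : ℚ) : ℝ)
          exact_mod_cast le_of_lt q.2.1
        · show ((q : ℚ) : ℝ) ≤ 1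
          exact_mod_cast le_of_lt q.2.2
    set t : ℝ := sSup T with htdef
    have ht0 : 0 ≤ t := le_csSup hTbdd (mem_insert _ _)
    have ht1 : t ≤ 1 := csSup_le hTne (fun r hr => (hTsub r hr).2)
    refine ⟨⟨t, ht0, ht1⟩, ?_⟩
    have hclaim : IsLUB (Sset ⟨t, ht0, ht1⟩) y := by
      constructor
      · rintro s (rfl | ⟨q, hq, rfl⟩)
        · exact hmY y
        · obtain ⟨r, hrT, hqr⟩ := exists_lt_of_lt_csSup hTne hq
          rcases hrT with rfl | ⟨q', hq', hq'e⟩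
          · exfalso
            have : (0:ℝ) < ((q:ℚ):ℝ) := by exact_mod_cast q.2.1
            linarith
          · have hqq' : q < q' := by
              rw [← Subtype.coe_lt_coe]
              have : ((q:ℚ):ℝ) < ((q':ℚ):ℝ) := by
                rw [← hq'e] at hqr
                simpa using hqr
              exact_mod_cast this
            exact le_of_lt (lt_of_lt_of_le (hφmono hqq') hq')
      · intro z hz
        by_contra hyz
        have hzy : z < y := not_le.mp hyz
        have hmz : mY ≤ z := hz (mem_insert _ _)
        obtain ⟨d1, hd1Dc, hd1a, hd1b⟩ := hIooNe z y hzy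
        have hd1E : d1 ∈ E := ⟨hd1Dc, lt_of_le_of_lt hmz hd1a, lt_of_lt_of_le hd1b (hMY y)⟩
        obtain ⟨d2, hd2Dc, hd2a, hd2b⟩ := hIooNe d1 y hd1b
        have hd2E : d2 ∈ E := ⟨hd2Dc, lt_trans hd1E.2.1 hd2a, lt_of_lt_of_le hd2b (hMY y)⟩
        obtain ⟨qa, hqa⟩ := φ.surjective ⟨d1, hd1E⟩
        obtain ⟨qb, hqb⟩ := φ.surjective ⟨d2, hd2E⟩
        have hqaqb : qa < qb := by
          rw [← φ.lt_iff_lt, hqa, hqb]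
          exact Subtype.mk_lt_mk.mpr hd2a
        have hqbT : ((qb : ℚ) : ℝ) ∈ T := by
          refine mem_insert_iff.mpr (Or.inr ⟨qb, ?_, rfl⟩)
          show (φ qb : Y) ≤ y
          rw [hqb]
          exact le_of_lt hd2b
        have hqat : ((qa : ℚ) : ℝ) < t := by
          have h1 : ((qa : ℚ) : ℝ) < ((qb : ℚ) : ℝ) := by exact_mod_cast hqaqb
          exact lt_of_lt_of_le h1 (le_csSup hTbdd hqbT)
        have hmem : (φ qa : Y) ∈ Sset ⟨t, ht0, ht1⟩ :=
          mem_insert_iff.mpr (Or.inr ⟨qa, hqat, rfl⟩)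
        have hle : (φ qa : Y) ≤ z := hz hmem
        rw [hqa] at hle
        exact absurd hle (not_le_of_gt hd1a)
    exact (hFY ⟨t, ht0, ht1⟩).unique hclaim
  -- the order isomorphism and the homeomorphism
  set G : Set.Icc (0:ℝ) 1 ≃o Y := StrictMono.orderIsoOfSurjective FY hFmono hFsurj with hG
  have hcont : Continuous (fun y : Y => (G.symm y : Set.Icc (0:ℝ) 1)) := by
    have heq : (inferInstance : TopologicalSpace (Set.Icc (0:ℝ) 1)) =
        TopologicalSpace.generateFrom {s | ∃ a, s = Ioi a ∨ s = Iio a} :=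
      OrderTopology.topology_eq_generate_intervals
    rw [continuous_iff_coinduced_le]
    have hle2 : TopologicalSpace.coinduced (fun y : Y => (G.symm y : Set.Icc (0:ℝ) 1))
        inferInstance ≤ TopologicalSpace.generateFrom {s | ∃ a, s = Ioi a ∨ s = Iio a} := by
      apply le_generateFrom
      rintro s ⟨a, rfl | rfl⟩
      · rw [isOpen_coinduced]
        have hpre : (fun y : Y => G.symm y) ⁻¹' (Ioi a) = {x | (G a : Y) < x} := by
          ext x
          simp only [mem_preimage, mem_Ioi, mem_setOf_eq]
          rw [← G.lt_iff_lt, G.apply_symm_apply]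
        rw [hpre]
        exact hIoiOpen _
      · rw [isOpen_coinduced]
        have hpre : (fun y : Y => G.symm y) ⁻¹' (Iio a) = {x | x < (G a : Y)} := by
          ext x
          simp only [mem_preimage, mem_Iio, mem_setOf_eq]
          rw [← G.lt_iff_lt, G.apply_symm_apply]
        rw [hpre]
        exact hIioOpen _
    exact hle2.trans_eq heq.symm
  exact ⟨Continuous.homeoOfEquivCompactToT2 (f := G.symm.toEquiv) hcont⟩

end ArcMain
theorem no_isolated {Z : Type*} [TopologicalSpace Z] [ConnectedSpace Z] [T1Space Z]
    {z₁ z₂ : Z} (h : z₁ ≠ z₂) (z : Z) : ¬ IsOpen ({z} : Set Z) := by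
  intro hopen
  have : ({z} : Set Z) = univ := (isClopen_iff.mp ⟨isClosed_singleton, hopen⟩).resolve_left
    (by simp)
  have h1 : z₁ = z := by
    have := eq_univ_iff_forall.mp this z₁; simpa using this
  have h2 : z₂ = z := by
    have := eq_univ_iff_forall.mp this z₂; simpa using this
  exact h (h1.trans h2.symm)

theorem offdiag_connected {Y : Type*} [MetricSpace Y] [CompactSpace Y] [ConnectedSpace Y]
    [LocallyConnectedSpace Y] (hndY : ∃ y₁ y₂ : Y, y₁ ≠ y₂)
    (hnotarc : ¬ Nonempty (Y ≃ₜ (Set.Icc (0 : ℝ) 1))) :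
    IsConnected {p : Y × Y | p.1 ≠ p.2} := by
  obtain ⟨y₁, y₂, hy⟩ := hndY
  have hUopen : IsOpen {p : Y × Y | p.1 ≠ p.2} := by
    have : {p : Y × Y | p.1 ≠ p.2} = (Set.diagonal Y)ᶜ := rfl
    rw [this]
    exact (isClosed_diagonal).isOpen_compl
  refine ⟨⟨(y₁, y₂), hy⟩, ?_⟩
  by_contra hpc
  rw [IsPreconnected] at hpc
  push_neg at hpc
  obtain ⟨u, v, hu, hv, hUuv, hUu, hUv, hUempty⟩ := hpc

  apply hnotarc
  refine arc_of_separation (A := {p : Y × Y | p.1 ≠ p.2} ∩ u)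
    (B := {p : Y × Y | p.1 ≠ p.2} ∩ v) (hUopen.inter hu) (hUopen.inter hv) ?_ ?_ ?_ ?_ ?_ ?_
  · intro p hp
    rcases hUuv hp with h | h
    · exact Or.inl ⟨hp, h⟩
    · exact Or.inr ⟨hp, h⟩
  · rw [← hUempty]
    ext p
    constructor
    · rintro ⟨⟨h1, h2⟩, ⟨h3, h4⟩⟩
      exact ⟨h1, h2, h4⟩
    · rintro ⟨h1, h2, h3⟩
      exact ⟨⟨h1, h2⟩, ⟨h1, h3⟩⟩
  · exact fun p hp => hp.1
  · exact fun p hp => hp.1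
  · exact hUu
  · exact hUv

/-- Let `X`, `Y` be continua, with `Y` nondegenerate, locally connected and not an arc,
and let `f : X → Y` be a continuous surjective monotone open map. Then the diagonal
`Δ_X` is a nonblock subcontinuum of `X²`. -/
theorem stmt8 {X Y : Type*} [MetricSpace X] [CompactSpace X] [ConnectedSpace X]
    [MetricSpace Y] [CompactSpace Y] [ConnectedSpace Y] [LocallyConnectedSpace Y]
    (hndY : ∃ y₁ y₂ : Y, y₁ ≠ y₂)
    (hnotarc : ¬ Nonempty (Y ≃ₜ (Set.Icc (0 : ℝ) 1)))
    (f : X → Y) (hf : Continuous f) (hsurj : Function.Surjective f)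
    (hmono : ∀ B : Set Y, IsConnected B → IsConnected (f ⁻¹' B))
    (hopen : IsOpenMap f) :
    IsNonblockSubcontinuum {p : X × X | p.1 = p.2} := by
  classical
  haveI : LocallyConnectedSpace (Y × Y) := prod_locallyConnected
  obtain ⟨y₁, y₂, hy⟩ := hndY
  obtain ⟨x₁', hx₁'⟩ := hsurj y₁
  obtain ⟨x₂', hx₂'⟩ := hsurj y₂
  have hndX : x₁' ≠ x₂' := fun h => hy (by rw [← hx₁', ← hx₂', h])
  set g : X × X → Y × Y := fun p => (f p.1, f p.2) with hg
  have hgc : Continuous g := (hf.comp continuous_fst).prodMk (hf.comp continuous_snd)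
  have hgsurj : Function.Surjective g := by
    rintro ⟨z₁, z₂⟩
    obtain ⟨a, ha⟩ := hsurj z₁
    obtain ⟨b, hb⟩ := hsurj z₂
    exact ⟨(a, b), by simp [hg, ha, hb]⟩
  have hgfib : ∀ z : Y × Y, IsPreconnected (g ⁻¹' {z}) := by
    rintro ⟨z₁, z₂⟩
    have h1 : g ⁻¹' {(z₁, z₂)} = (f ⁻¹' {z₁}) ×ˢ (f ⁻¹' {z₂}) := by
      ext ⟨a, b⟩
      simp [hg, Prod.ext_iff]
    rw [h1]
    exact ((hmono {z₁} isConnected_singleton).isPreconnected).prod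
      ((hmono {z₂} isConnected_singleton).isPreconnected)
  -- the off-diagonal of Y is connected
  have hUconn : IsConnected {p : Y × Y | p.1 ≠ p.2} :=
    offdiag_connected ⟨y₁, y₂, hy⟩ hnotarc
  have hUopen : IsOpen {p : Y × Y | p.1 ≠ p.2} := by
    have : {p : Y × Y | p.1 ≠ p.2} = (Set.diagonal Y)ᶜ := rfl
    rw [this]
    exact (isClosed_diagonal).isOpen_compl
  -- increasing exhaustion of the off-diagonal of Y
  obtain ⟨L', hL'c, hL'conn, hL'U, hL'mono, hL'cov⟩ :=
    exhaustion_open_connected hUopen hUconn.isPreconnected hUconn.nonempty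
  -- pull back
  set L : ℕ → Set (X × X) := fun n => g ⁻¹' (L' n) with hL
  constructor
  · -- the diagonal is a subcontinuum
    constructor
    · exact (isClosed_diagonal).isCompact
    · have : {p : X × X | p.1 = p.2} = Set.range (fun x : X => (x, x)) := by
        ext ⟨a, b⟩
        simp only [mem_setOf_eq, Set.mem_range, Prod.ext_iff]
        constructor
        · rintro rfl; exact ⟨a, rfl, rfl⟩
        · rintro ⟨x, rfl, rfl⟩; rfl
      rw [this]
      exact isConnected_range (by continuity)
  refine ⟨?_, L, ?_, ?_, ?_, ?_⟩
  · -- empty interior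
    by_contra hne
    obtain ⟨p, hp⟩ := nonempty_iff_ne_empty.mpr hne
    have hpd : p.1 = p.2 := (interior_subset hp : p ∈ {q : X × X | q.1 = q.2})
    obtain ⟨O, hOsub, hOopen, hpO⟩ := mem_interior.mp hp
    obtain ⟨O₁, O₂, hO₁, hO₂, hp₁, hp₂, hO₁₂⟩ := isOpen_prod_iff.mp hOopen p.1 p.2 hpO
    have hO₁sub : O₁ ⊆ {p.1} := by
      intro w hw
      have : (w, p.2) ∈ {q : X × X | q.1 = q.2} := hOsub (hO₁₂ ⟨hw, hp₂⟩)
      simp only [mem_setOf_eq] at this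
      simp [this, hpd]
    have : O₁ = {p.1} := subset_antisymm hO₁sub (by simpa using hp₁)
    exact no_isolated hndX p.1 (this ▸ hO₁)
  · -- each L n is a subcontinuum
    intro n
    constructor
    · exact (((hL'c n).isClosed).preimage hgc).isCompact
    · exact preimage_connected_of_connected_fibers hgc hgsurj hgfib (hL'c n)
        (hL'conn n).isPreconnected (hL'conn n).nonempty
  · -- contained in the complement of the diagonal
    intro n p hp
    have h2 := hL'U n hp
    intro hd
    have hd' : p.1 = p.2 := hd
    exact (h2 : ¬ _) (show (g p).1 = (g p).2 by simp [hg, hd'])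
  · exact fun n p hp => hL'mono n hp
  · -- density
    intro p hp
    simp only [mem_compl_iff, mem_setOf_eq] at hp
    rw [_root_.mem_closure_iff]
    intro O hOopen hpO
    obtain ⟨O₁, O₂, hO₁, hO₂, hp₁, hp₂, hO₁₂⟩ := isOpen_prod_iff.mp hOopen p.1 p.2 hpO
    -- find a point of O whose coordinates have different images
    have hstep : ∃ q : X × X, q ∈ O₁ ×ˢ O₂ ∧ f q.1 ≠ f q.2 := by
      by_cases hf12 : f p.1 = f p.2
      · -- the fiber has empty interior
        have : ∃ x₂' ∈ O₂, f x₂' ≠ f p.2 := by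
          by_contra hcon
          push_neg at hcon
          have himg : IsOpen (f '' O₂) := hopen O₂ hO₂
          have : f '' O₂ = {f p.2} := by
            apply subset_antisymm
            · rintro z ⟨w, hw, rfl⟩
              simp [hcon w hw]
            · rintro z (rfl : z = f p.2)
              exact ⟨p.2, hp₂, rfl⟩
          exact no_isolated hy (f p.2) (this ▸ himg)
        obtain ⟨x₂', hx₂'O, hx₂'f⟩ := this
        exact ⟨(p.1, x₂'), ⟨hp₁, hx₂'O⟩, fun h => hx₂'f (by rw [← hf12, h])⟩
      · exact ⟨p, ⟨hp₁, hp₂⟩, hf12⟩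
    obtain ⟨q, hqO, hqf⟩ := hstep
    have hqU : g q ∈ {p : Y × Y | p.1 ≠ p.2} := hqf
    have : g q ∈ ⋃ n, L' n := hL'cov hqU
    obtain ⟨n, hn⟩ := mem_iUnion.mp this
    exact ⟨q, hO₁₂ hqO, mem_iUnion.mpr ⟨n, hn⟩⟩
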